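/- In the Aczel–Feferman truth theory PT, propositionhood of a universal statement satisfies: P(∀̇f) holds if and only if for all x, P(f x). -/
import Mathlib

universe u v

/-- In (an abstract model of) PT, propositionhood of a universal statement:
`P(∀̇ f) ↔ ∀ x, P (f x)`, where `P z := T z ∨ T ¬̇z`. -/
theorem pt_prop_forall {S : Type u} {D : Type v} (neg : S → S)
    (dall : (D → S) → S) (T : S → Prop)
    (hall : ∀ f : D → S, T (dall f) ↔ ∀ x : D, T (f x))
    (hnall : ∀ f : D → S, T (neg (dall f)) ↔
      (∀ x : D, T (f x) ∨ T (neg (f x))) ∧ ∃ x : D, T (neg (f x)))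
    (hcons : ∀ x : S, ¬ (T x ∧ T (neg x)))
    (P : S → Prop) (hP : ∀ z : S, P z ↔ T z ∨ T (neg z)) :
    ∀ f : D → S, P (dall f) ↔ ∀ x : D, P (f x) := by
  intro f
  rw [hP]
  constructor
  · rintro (h | h) x
    · exact (hP _).2 (Or.inl ((hall f).1 h x))
    · exact (hP _).2 (((hnall f).1 h).1 x)
  · intro h
    by_cases hx : ∀ x, T (f x)
    · exact Or.inl ((hall f).2 hx)
    · push_neg at hx
      obtain ⟨x, hx⟩ := hx
      refine Or.inr ((hnall f).2 ⟨fun y => (hP _).1 (h y), ⟨x, ?_⟩⟩)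
      rcases (hP _).1 (h x) with h' | h'
      · exact absurd h' hx
      · exact h'
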